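/- Let f₁ : [0,1] → ℝ be continuous and nonnegative with ∫₀¹ x f₁(x) dx = 1, and assume that every complex σ ≠ 1 with ∫₀¹ t^σ f₁(t) dt = 1 satisfies Re σ < 0 (Assumption 3). Then every complex σ with Re σ > −1, σ ≠ 0, and F₃(σ) = 1 satisfies Re σ < 0; i.e., σ = 0 is the element of Σ = {σ : Re σ > −1, F₃(σ) = 1} with the largest real part. -/

import Mathlib

open MeasureTheory Set intervalIntegral Complex Filter

private lemma aux_intInt {E : Type*} [NormedAddCommGroup E] {c K : ℝ} (hc : -1 < c) {h : ℝ → E}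
    (hm : AEStronglyMeasurable h (volume.restrict (Ioc (0:ℝ) 1)))
    (hb : ∀ t ∈ Ioc (0:ℝ) 1, ‖h t‖ ≤ K * t ^ c) :
    IntervalIntegrable h volume 0 1 := by
  rw [intervalIntegrable_iff_integrableOn_Ioc_of_le zero_le_one]
  have hg : IntegrableOn (fun t : ℝ => K * t ^ c) (Ioc (0:ℝ) 1) := by
    have := (intervalIntegrable_rpow' (a := 0) (b := 1) hc).const_mul K
    rwa [intervalIntegrable_iff_integrableOn_Ioc_of_le zero_le_one] at this
  refine MeasureTheory.Integrable.mono hg hm ?_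
  rw [ae_restrict_iff' measurableSet_Ioc]
  filter_upwards with t ht
  exact (hb t ht).trans (le_abs_self _)

theorem stmt11 (f₁ : ℝ → ℝ) (hf₁ : ContinuousOn f₁ (Set.Icc 0 1))
    (hnn : ∀ x ∈ Set.Icc (0:ℝ) 1, 0 ≤ f₁ x)
    (hnorm : ∫ x in (0:ℝ)..1, x * f₁ x = 1)
    (hassum3 : ∀ σ : ℂ, σ ≠ 1 → (∫ t in (0:ℝ)..1, (t : ℂ) ^ σ * (f₁ t : ℂ)) = 1 → σ.re < 0) :
    ∀ σ : ℂ, -1 < σ.re → σ ≠ 0 →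
      (∫ t in (0:ℝ)..1,
          (t : ℂ) ^ σ * ((f₁ t - (1 / t ^ 2) * ∫ x in (0:ℝ)..t, x * f₁ x : ℝ) : ℂ)) = 1 →
      σ.re < 0 := by
  intro σ hσre hσ0 hyp
  by_contra hcon
  push_neg at hcon
  set G : ℝ → ℝ := fun t => ∫ x in (0:ℝ)..t, x * f₁ x with hGdef
  -- basic facts about f₁ and G
  obtain ⟨M, hM⟩ := isCompact_Icc.exists_bound_of_continuousOn hf₁
  have hM0 : 0 ≤ M := le_trans (norm_nonneg _) (hM 0 (by constructor <;> norm_num))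
  have hxfcont : ContinuousOn (fun x : ℝ => x * f₁ x) (Icc 0 1) :=
    continuousOn_id.mul hf₁
  have hxfint : ∀ t ∈ Icc (0:ℝ) 1, IntervalIntegrable (fun x : ℝ => x * f₁ x) volume 0 t := by
    intro t ht
    apply ContinuousOn.intervalIntegrable
    apply hxfcont.mono
    rw [uIcc_of_le ht.1]
    exact Icc_subset_Icc le_rfl ht.2
  have hG0 : G 0 = 0 := integral_same
  have hG1 : G 1 = 1 := hnorm
  have hGnn : ∀ t ∈ Icc (0:ℝ) 1, 0 ≤ G t := by
    intro t ht
    apply intervalIntegral.integral_nonneg ht.1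
    intro u hu
    exact mul_nonneg hu.1 (hnn u ⟨hu.1, hu.2.trans ht.2⟩)
  have hGle : ∀ t ∈ Icc (0:ℝ) 1, G t ≤ M * t ^ 2 := by
    intro t ht
    have h1 : G t ≤ ∫ _ in (0:ℝ)..t, M * t := by
      apply intervalIntegral.integral_mono_on ht.1 (hxfint t ht) intervalIntegrable_const
      intro x hx
      have hfx : f₁ x ≤ M := (le_abs_self _).trans (hM x ⟨hx.1, hx.2.trans ht.2⟩)
      have := hnn x ⟨hx.1, hx.2.trans ht.2⟩
      nlinarith [hx.1, hx.2]
    rw [intervalIntegral.integral_const, smul_eq_mul] at h1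
    nlinarith [h1]
  have hGcont : ContinuousOn G (Icc 0 1) := by
    have h0 : IntegrableOn (fun x : ℝ => x * f₁ x) (uIcc (0:ℝ) 1) volume := by
      rw [uIcc_of_le zero_le_one]
      exact hxfcont.integrableOn_compact isCompact_Icc
    have h := intervalIntegral.continuousOn_primitive_interval h0
    rwa [uIcc_of_le zero_le_one] at h
  have hGderiv : ∀ t ∈ Ioo (0:ℝ) 1, HasDerivAt G (t * f₁ t) t := by
    intro t ht
    have hmem : Icc (0:ℝ) 1 ∈ nhds t := Icc_mem_nhds ht.1 ht.2
    refine intervalIntegral.integral_hasDerivAt_right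
      (hxfint t ⟨ht.1.le, ht.2.le⟩) ?_ (hxfcont.continuousAt hmem)
    exact ⟨Icc 0 1, hmem, hxfcont.aestronglyMeasurable measurableSet_Icc⟩
  -- the two integrands
  set h₁ : ℝ → ℂ := fun t => (t : ℂ) ^ σ * (f₁ t : ℂ) with hh₁
  set h₂ : ℝ → ℂ := fun t => (t : ℂ) ^ (σ - 2) * (G t : ℂ) with hh₂
  have hcpow_cont : ∀ c : ℂ, ContinuousOn (fun t : ℝ => (t : ℂ) ^ c) (Ioc (0:ℝ) 1) := by
    intro c t ht
    exact ((continuousAt_cpow_const (ofReal_mem_slitPlane.2 ht.1)).comp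
      continuous_ofReal.continuousAt).continuousWithinAt
  have habs : ∀ c : ℂ, ∀ t : ℝ, 0 < t → ‖(t : ℂ) ^ c‖ = t ^ c.re := by
    intro c t ht
    rw [Complex.norm_cpow_eq_rpow_re_of_pos ht]
  have h₁int : IntervalIntegrable h₁ volume 0 1 := by
    apply aux_intInt (K := M) hσre
    · exact ((hcpow_cont σ).aestronglyMeasurable measurableSet_Ioc).mul
        ((continuous_ofReal.comp_continuousOn (hf₁.mono Ioc_subset_Icc_self)).aestronglyMeasurable
          measurableSet_Ioc)
    · intro t ht
      rw [hh₁, norm_mul, habs σ t ht.1, Complex.norm_real]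
      have h1 : ‖f₁ t‖ ≤ M := hM t ⟨ht.1.le, ht.2⟩
      have h2 : (0:ℝ) ≤ t ^ σ.re := Real.rpow_nonneg ht.1.le _
      nlinarith
  have h₂int : IntervalIntegrable h₂ volume 0 1 := by
    apply aux_intInt (K := M) hσre
    · exact ((hcpow_cont (σ - 2)).aestronglyMeasurable measurableSet_Ioc).mul
        ((continuous_ofReal.comp_continuousOn (hGcont.mono Ioc_subset_Icc_self)).aestronglyMeasurable
          measurableSet_Ioc)
    · intro t ht
      rw [hh₂, norm_mul, habs _ t ht.1, Complex.norm_real, Real.norm_eq_abs,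
        _root_.abs_of_nonneg (hGnn t ⟨ht.1.le, ht.2⟩)]
      calc t ^ (σ - 2).re * G t ≤ t ^ (σ - 2).re * (M * t ^ 2) := by
            gcongr
            · exact Real.rpow_nonneg ht.1.le _
            · exact hGle t ⟨ht.1.le, ht.2⟩
        _ = M * (t ^ (σ.re - 2) * t ^ (2:ℝ)) := by
            rw [show (σ - 2).re = σ.re - 2 by simp,
              show t ^ (2:ℕ) = t ^ (2:ℝ) by rw [← Real.rpow_natCast t 2]; norm_num]
            ring
        _ = M * t ^ (σ.re - 2 + 2) := by rw [Real.rpow_add ht.1]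
        _ = M * t ^ σ.re := by rw [show σ.re - 2 + 2 = σ.re by ring]
  -- FTC for Φ t = t^(σ-1) * G t
  set Φ : ℝ → ℂ := fun t => (t : ℂ) ^ (σ - 1) * (G t : ℂ) with hΦ
  set Ψ : ℝ → ℂ := fun t => (σ - 1) * ((t : ℂ) ^ (σ - 2) * (G t : ℂ)) + (t : ℂ) ^ σ * (f₁ t : ℂ)
    with hΨ
  have hΦ0 : Φ 0 = 0 := by rw [hΦ]; simp [hG0]
  have hΦ1 : Φ 1 = 1 := by rw [hΦ]; simp [hG1]
  have hΦcont : ContinuousOn Φ (Icc 0 1) := by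
    intro t ht
    rcases eq_or_lt_of_le ht.1 with h0 | h0
    · -- t = 0 : squeeze
      rw [ContinuousWithinAt, ← h0, hΦ0]
      apply squeeze_zero_norm' (a := fun t : ℝ => M * t ^ (σ.re + 1))
      · filter_upwards [self_mem_nhdsWithin] with u hu
        rcases eq_or_lt_of_le hu.1 with h1 | h1
        · rw [hΦ]
          simp only [← h1]
          rw [hG0]
          simp [Real.zero_rpow (by positivity : σ.re + 1 ≠ 0)]
        · have hGu := hGle u hu
          have hGnnu := hGnn u hu
          rw [hΦ]
          simp only
          rw [norm_mul, habs _ u h1, Complex.norm_real, Real.norm_eq_abs,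
            _root_.abs_of_nonneg hGnnu]
          calc u ^ (σ - 1).re * G u ≤ u ^ (σ - 1).re * (M * u ^ 2) := by
                gcongr
            _ = M * (u ^ (σ.re - 1) * u ^ (2:ℝ)) := by
                rw [show (σ - 1).re = σ.re - 1 by simp,
                  show u ^ (2:ℕ) = u ^ (2:ℝ) by rw [← Real.rpow_natCast u 2]; norm_num]
                ring
            _ = M * u ^ (σ.re - 1 + 2) := by rw [Real.rpow_add h1]
            _ = M * u ^ (σ.re + 1) := by rw [show σ.re - 1 + 2 = σ.re + 1 by ring]
      · have h1 : Tendsto (fun t : ℝ => t ^ (σ.re + 1)) (nhdsWithin 0 (Icc 0 1))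
            (nhds ((0:ℝ) ^ (σ.re + 1))) :=
          (Real.continuousAt_rpow_const 0 (σ.re + 1) (Or.inr (by positivity))).continuousWithinAt
        rw [Real.zero_rpow (by positivity : σ.re + 1 ≠ 0)] at h1
        have := h1.const_mul M
        simpa using this
    · have hc1 : ContinuousAt (fun u : ℝ => (u : ℂ) ^ (σ - 1)) t :=
        (continuousAt_cpow_const (ofReal_mem_slitPlane.2 h0)).comp
          continuous_ofReal.continuousAt
      exact hc1.continuousWithinAt.mul ((continuous_ofReal.comp_continuousOn hGcont) t ht)
  have hΦderiv : ∀ t ∈ Ioo (0:ℝ) 1, HasDerivWithinAt Φ (Ψ t) (Ioi t) t := by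
    intro t ht
    have htne : (t:ℂ) ≠ 0 := ofReal_ne_zero.2 ht.1.ne'
    have hd2 : HasDerivAt (fun u : ℝ => (u:ℂ) ^ (σ - 1)) ((σ - 1) * (t:ℂ) ^ (σ - 1 - 1)) t :=
      ((Complex.hasStrictDerivAt_cpow_const
        (ofReal_mem_slitPlane.2 ht.1)).hasDerivAt).comp_ofReal
    have hd3 : HasDerivAt (fun u : ℝ => ((G u : ℝ):ℂ)) ((t * f₁ t : ℝ):ℂ) t :=
      (hGderiv t ht).ofReal_comp
    refine HasDerivAt.hasDerivWithinAt ?_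
    have hmul := hd2.mul hd3
    refine hmul.congr_deriv ?_
    rw [hΨ]
    simp only
    push_cast
    rw [show σ - 1 - 1 = σ - 2 by ring]
    have key : (t:ℂ) ^ (σ - 1) * (t:ℂ) = (t:ℂ) ^ σ := by
      rw [Complex.cpow_sub _ _ htne, Complex.cpow_one, div_mul_cancel₀ _ htne]
    rw [← key]
    ring
  have hΨint : IntervalIntegrable Ψ volume 0 1 := (h₂int.const_mul (σ - 1)).add h₁int
  have hFTC : (σ - 1) * (∫ t in (0:ℝ)..1, h₂ t) + (∫ t in (0:ℝ)..1, h₁ t) = 1 := by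
    have h := integral_eq_sub_of_hasDeriv_right_of_le zero_le_one hΦcont hΦderiv hΨint
    rw [hΦ1, hΦ0, sub_zero] at h
    have hsum : (∫ t in (0:ℝ)..1, Ψ t)
        = (σ - 1) * (∫ t in (0:ℝ)..1, h₂ t) + (∫ t in (0:ℝ)..1, h₁ t) := by
      rw [show (∫ t in (0:ℝ)..1, Ψ t) = (∫ t in (0:ℝ)..1, (σ - 1) * h₂ t + h₁ t) from rfl,
        intervalIntegral.integral_add (h₂int.const_mul _) h₁int,
        intervalIntegral.integral_const_mul]
    rw [← hsum]
    exact h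
  have hyp2 : (∫ t in (0:ℝ)..1, h₁ t) - (∫ t in (0:ℝ)..1, h₂ t) = 1 := by
    rw [← intervalIntegral.integral_sub h₁int h₂int, ← hyp]
    apply intervalIntegral.integral_congr
    intro t ht
    rw [uIcc_of_le zero_le_one] at ht
    show h₁ t - h₂ t = (t:ℂ) ^ σ * ((f₁ t - (1 / t ^ 2) * G t : ℝ) : ℂ)
    rcases eq_or_lt_of_le ht.1 with h0 | h0
    · rw [hh₁, hh₂]
      simp only [← h0]
      rw [show ((0:ℝ):ℂ) = 0 by norm_num, Complex.zero_cpow hσ0, hG0]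
      simp
    · have htne : (t:ℂ) ≠ 0 := ofReal_ne_zero.2 h0.ne'
      have key : (t:ℂ) ^ (σ - 2) = (t:ℂ) ^ σ / ((t:ℂ)) ^ (2:ℕ) := by
        rw [Complex.cpow_sub _ _ htne, show ((2:ℂ)) = ((2:ℕ):ℂ) by norm_num,
          Complex.cpow_natCast]
      rw [hh₁, hh₂]
      simp only
      rw [key]
      push_cast
      have ht2 : ((t:ℝ):ℂ) ^ (2:ℕ) ≠ 0 := pow_ne_zero _ htne
      field_simp
  have hI₂ : (∫ t in (0:ℝ)..1, h₂ t) = 0 := by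
    have hσI : σ * (∫ t in (0:ℝ)..1, h₂ t) = 0 := by linear_combination hFTC - hyp2
    rcases mul_eq_zero.1 hσI with h | h
    · exact absurd h hσ0
    · exact h
  have hI₁ : (∫ t in (0:ℝ)..1, h₁ t) = 1 := by linear_combination hyp2 + hI₂
  by_cases hσ1 : σ = 1
  · -- σ = 1 : contradiction with positivity
    subst hσ1
    -- real version of the integral
    have hrint : IntervalIntegrable (fun t : ℝ => t⁻¹ * G t) volume 0 1 := by
      apply aux_intInt (c := (1:ℝ)) (K := M) (by norm_num)
      · apply ContinuousOn.aestronglyMeasurable ?_ measurableSet_Ioc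
        apply ContinuousOn.mul
        · intro u hu
          exact (continuousAt_inv₀ hu.1.ne').continuousWithinAt
        · exact hGcont.mono Ioc_subset_Icc_self
      · intro t ht
        rw [Real.norm_eq_abs, abs_mul, _root_.abs_of_nonneg (inv_nonneg.2 ht.1.le),
          _root_.abs_of_nonneg (hGnn t ⟨ht.1.le, ht.2⟩), Real.rpow_one]
        have := hGle t ⟨ht.1.le, ht.2⟩
        have hGnnt := hGnn t ⟨ht.1.le, ht.2⟩
        have hti : t⁻¹ * t = 1 := inv_mul_cancel₀ ht.1.ne'
        have h2 : t⁻¹ * G t ≤ t⁻¹ * (M * t ^ 2) := by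
          gcongr
          exact inv_nonneg.2 ht.1.le
        calc t⁻¹ * G t ≤ t⁻¹ * (M * t ^ 2) := h2
          _ = M * t := by
            rw [pow_two, mul_comm t t, ← mul_assoc M t t, mul_comm (t⁻¹), mul_assoc,
              mul_inv_cancel₀ ht.1.ne', mul_one]
    have hre : (∫ t in (0:ℝ)..1, h₂ t) = ((∫ t in (0:ℝ)..1, t⁻¹ * G t : ℝ) : ℂ) := by
      rw [← intervalIntegral.integral_ofReal]
      apply intervalIntegral.integral_congr
      intro t ht
      rw [uIcc_of_le zero_le_one] at ht
      rcases eq_or_lt_of_le ht.1 with h0 | h0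
      · rw [hh₂]
        simp only [← h0]
        rw [hG0]
        push_cast
        simp
      · have htne : (t:ℂ) ≠ 0 := ofReal_ne_zero.2 h0.ne'
        rw [hh₂]
        simp only
        rw [show (1:ℂ) - 2 = -(1:ℂ) by ring, Complex.cpow_neg, Complex.cpow_one]
        push_cast
        ring
    rw [hre] at hI₂
    have hr0 : (∫ t in (0:ℝ)..1, t⁻¹ * G t : ℝ) = 0 := by exact_mod_cast hI₂
    -- positivity of the real integral
    have hcontG1 : Tendsto G (nhdsWithin 1 (Icc 0 1)) (nhds 1) := by
      have := hGcont 1 (by norm_num)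
      rwa [ContinuousWithinAt, hG1] at this
    have hev : ∀ᶠ t in nhdsWithin 1 (Icc 0 1), (1:ℝ)/2 < G t :=
      hcontG1.eventually (eventually_gt_nhds (by norm_num))
    rw [eventually_nhdsWithin_iff, Metric.eventually_nhds_iff] at hev
    obtain ⟨ε, hε, hball⟩ := hev
    set a : ℝ := max (1 - ε/2) (1/2) with ha
    have ha2 : a < 1 := by
      apply max_lt
      · linarith
      · norm_num
    have ha1 : (1:ℝ)/2 ≤ a := le_max_right _ _
    have ha0 : (0:ℝ) ≤ a := by linarith
    have haG : ∀ t ∈ Icc a 1, 1/2 < G t := by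
      intro t htt
      apply hball (y := t) ?_ ⟨by linarith [htt.1], htt.2⟩
      rw [Real.dist_eq, abs_of_nonpos (by linarith [htt.2])]
      have : 1 - ε/2 ≤ a := le_max_left _ _
      have := htt.1
      linarith
    have hsplit : (∫ t in (0:ℝ)..a, t⁻¹ * G t) + (∫ t in a..(1:ℝ), t⁻¹ * G t)
        = (∫ t in (0:ℝ)..1, t⁻¹ * G t) := by
      apply intervalIntegral.integral_add_adjacent_intervals
      · apply hrint.mono_set
        rw [uIcc_of_le ha0, uIcc_of_le zero_le_one]
        exact Icc_subset_Icc le_rfl ha2.le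
      · apply hrint.mono_set
        rw [uIcc_of_le ha2.le, uIcc_of_le zero_le_one]
        exact Icc_subset_Icc ha0 le_rfl
    have hpos1 : (0:ℝ) ≤ ∫ t in (0:ℝ)..a, t⁻¹ * G t := by
      apply intervalIntegral.integral_nonneg ha0
      intro u hu
      exact mul_nonneg (inv_nonneg.2 hu.1) (hGnn u ⟨hu.1, hu.2.trans ha2.le⟩)
    have hpos2 : (1 - a) * (1/2) ≤ ∫ t in a..(1:ℝ), t⁻¹ * G t := by
      have := intervalIntegral.integral_mono_on (a := a) (b := 1)
        (f := fun _ : ℝ => (1:ℝ)/2) (g := fun t : ℝ => t⁻¹ * G t) ha2.le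
        intervalIntegrable_const
        (hrint.mono_set (by
          rw [uIcc_of_le ha2.le, uIcc_of_le zero_le_one]
          exact Icc_subset_Icc ha0 le_rfl)) ?_
      · rw [intervalIntegral.integral_const, smul_eq_mul] at this
        linarith
      · intro t htt
        have h1 : (1:ℝ)/2 < G t := haG t htt
        have h2 : (1:ℝ) ≤ t⁻¹ := by
          rw [le_inv_comm₀]
          · simpa using htt.2
          · norm_num
          · linarith [htt.1]
        nlinarith [hGnn t ⟨by linarith [htt.1], htt.2⟩]
    nlinarith [hsplit, hpos1, hpos2, hr0, ha2]
  · -- σ ≠ 1 : use assumption 3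
    have hI₁' : (∫ t in (0:ℝ)..1, (t:ℂ) ^ σ * (f₁ t : ℂ)) = 1 := hI₁
    exact absurd (hassum3 σ hσ1 hI₁') (not_lt.2 hcon)
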